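/- (Mixed dynamic plasticity of convex quadrilaterals.) Let A_1A_2A_3A_4 be a convex quadrilateral in ℝ² with vertices listed in cyclic (say counterclockwise) order, and let A_0 be an interior point of the quadrilateral that also lies in the interior of triangle A_1A_2A_3. Suppose B_1, B_2, B_3, B_4 > 0 satisfy the balance condition Σ_{i=1}^4 B_i u(A_0, A_i) = 0 (so A_0 is the weighted Fermat–Torricelli point in the floating case), together with B_1 + B_2 + B_3 + B_4 = c and B_1 + B_2 + B_3 = B_4 + B_0. Then B_4 = (c − B_0)/2 and the plasticity relations hold: B_2 · sin∠A_2A_0A_3 = B_1 · sin∠A_1A_0A_3 + B_4 · sin∠A_3A_0A_4, and B_3 · sin∠A_2A_0A_3 = B_1 · sin∠A_1A_0A_2 + B_4 · sin(∠A_1A_0A_2 + ∠A_1A_0A_4). In particular the ratios B_2/B_1 and B_3/B_1 are determined by the ratio B_4/B_1 together with the angles at A_0. -/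

import Mathlib

open EuclideanGeometry

private lemma areaForm_eq_sin
    {E : Type*} [NormedAddCommGroup E] [InnerProductSpace ℝ E]
    [Fact (Module.finrank ℝ E = 2)] (o : Orientation ℝ E (Fin 2)) (x y : E) :
    o.areaForm x y = ‖x‖ * ‖y‖ * Real.Angle.sin (o.oangle x y) := by
  have him : (o.kahler x y).im = o.areaForm x y := by
    simp [Orientation.kahler_apply_apply, Complex.real_smul]
  rw [Orientation.oangle, Real.Angle.sin_coe, Complex.sin_arg, Orientation.norm_kahler, him]
  rcases eq_or_ne x 0 with rfl | hx
  · simp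
  rcases eq_or_ne y 0 with rfl | hy
  · simp
  have h : ‖x‖ * ‖y‖ ≠ 0 :=
    mul_ne_zero (norm_ne_zero_iff.2 hx) (norm_ne_zero_iff.2 hy)
  field_simp

/-- Mixed dynamic plasticity of convex quadrilaterals: for a convex quadrilateral
`A₁A₂A₃A₄` in cyclic order with `A₀` interior to it and to the triangle `A₁A₂A₃`
(encoded by the angle conditions at `A₀`: the four consecutive angles lie in `(0, π)`
and sum to `2π`, and `∠A₁A₀A₂ + ∠A₂A₀A₃ > π`), if the positive weights satisfy the
balance condition at `A₀`, `∑ Bᵢ = c` and `B₁+B₂+B₃ = B₄+B₀`, then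
`B₄ = (c − B₀)/2` and the plasticity relations hold. Indices are shifted:
`A 0, …, A 3` are `A₁, …, A₄`. -/
theorem mixed_dynamic_plasticity_convex_quadrilateral
    (A : Fin 4 → EuclideanSpace ℝ (Fin 2))
    (A₀ : EuclideanSpace ℝ (Fin 2))
    (hne : ∀ i, A i ≠ A₀)
    (h12 : 0 < ∠ (A 0) A₀ (A 1) ∧ ∠ (A 0) A₀ (A 1) < Real.pi)
    (h23 : 0 < ∠ (A 1) A₀ (A 2) ∧ ∠ (A 1) A₀ (A 2) < Real.pi)
    (h34 : 0 < ∠ (A 2) A₀ (A 3) ∧ ∠ (A 2) A₀ (A 3) < Real.pi)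
    (h41 : 0 < ∠ (A 3) A₀ (A 0) ∧ ∠ (A 3) A₀ (A 0) < Real.pi)
    (hcyc : ∠ (A 0) A₀ (A 1) + ∠ (A 1) A₀ (A 2) + ∠ (A 2) A₀ (A 3)
        + ∠ (A 3) A₀ (A 0) = 2 * Real.pi)
    (htri : Real.pi < ∠ (A 0) A₀ (A 1) + ∠ (A 1) A₀ (A 2))
    (B : Fin 4 → ℝ) (hB : ∀ i, 0 < B i)
    (hbal : ∑ i, B i • (‖A i - A₀‖⁻¹ • (A i - A₀)) = 0)
    (c B₀ : ℝ)
    (hsum : ∑ i, B i = c)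
    (hflow : B 0 + B 1 + B 2 = B 3 + B₀) :
    B 3 = (c - B₀) / 2 ∧
    B 1 * Real.sin (∠ (A 1) A₀ (A 2))
      = B 0 * Real.sin (∠ (A 0) A₀ (A 2)) + B 3 * Real.sin (∠ (A 2) A₀ (A 3)) ∧
    B 2 * Real.sin (∠ (A 1) A₀ (A 2))
      = B 0 * Real.sin (∠ (A 0) A₀ (A 1))
        + B 3 * Real.sin (∠ (A 0) A₀ (A 1) + ∠ (A 0) A₀ (A 3)) := by
  have hsum4 : B 0 + B 1 + B 2 + B 3 = c := by
    simpa [Fin.sum_univ_four] using hsum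
  have hv0 : ∀ i, A i - A₀ ≠ 0 := fun i => sub_ne_zero.mpr (hne i)
  haveI : Fact (Module.finrank ℝ (EuclideanSpace ℝ (Fin 2)) = 2) :=
    ⟨finrank_euclideanSpace_fin⟩
  have hπ := Real.pi_pos
  have h2π : (0:ℝ) < 2 * Real.pi := by linarith
  set a1 := ∠ (A 0) A₀ (A 1) with ha1
  set a2 := ∠ (A 1) A₀ (A 2) with ha2
  set a3 := ∠ (A 2) A₀ (A 3) with ha3
  set a4 := ∠ (A 3) A₀ (A 0) with ha4
  set a5 := ∠ (A 0) A₀ (A 3) with ha5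
  set ψ := ∠ (A 0) A₀ (A 2) with hψ
  have ha54 : a5 = a4 := by rw [ha5, ha4, EuclideanGeometry.angle_comm]
  have sin1 : 0 < Real.sin a1 := Real.sin_pos_of_pos_of_lt_pi h12.1 h12.2
  have sin2 : 0 < Real.sin a2 := Real.sin_pos_of_pos_of_lt_pi h23.1 h23.2
  have sin3 : 0 < Real.sin a3 := Real.sin_pos_of_pos_of_lt_pi h34.1 h34.2
  have sψ : 0 ≤ Real.sin ψ :=
    Real.sin_nonneg_of_nonneg_of_le_pi (EuclideanGeometry.angle_nonneg _ _ _)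
      (EuclideanGeometry.angle_le_pi _ _ _)
  have s12neg : Real.sin (a1 + a2) < 0 := by
    have h := Real.sin_pos_of_pos_of_lt_pi (x := a1 + a2 - Real.pi)
      (by linarith) (by linarith [h12.2, h23.2])
    rw [Real.sin_sub_pi] at h; linarith
  have key : ∀ o : Orientation ℝ (EuclideanSpace ℝ (Fin 2)) (Fin 2),
      o.oangle (A 0 - A₀) (A 1 - A₀) = (a1 : Real.Angle) →
      (B 1 * Real.sin a2 = B 0 * Real.sin ψ + B 3 * Real.sin a3 ∧
       B 2 * Real.sin a2 = B 0 * Real.sin a1 + B 3 * Real.sin (a1 + a5)) := by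
    intro o t01
    have hS : ∀ j : Fin 4,
        B 0 * Real.Angle.sin (o.oangle (A j - A₀) (A 0 - A₀))
        + B 1 * Real.Angle.sin (o.oangle (A j - A₀) (A 1 - A₀))
        + B 2 * Real.Angle.sin (o.oangle (A j - A₀) (A 2 - A₀))
        + B 3 * Real.Angle.sin (o.oangle (A j - A₀) (A 3 - A₀)) = 0 := by
      intro j
      have hrw : ∀ i : Fin 4,
          o.areaForm (A j - A₀) (B i • (‖A i - A₀‖⁻¹ • (A i - A₀)))
          = ‖A j - A₀‖ * (B i * Real.Angle.sin (o.oangle (A j - A₀) (A i - A₀))) := by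
        intro i
        rw [map_smul, map_smul, smul_eq_mul, smul_eq_mul, areaForm_eq_sin]
        have hni : ‖A i - A₀‖ ≠ 0 := norm_ne_zero_iff.2 (hv0 i)
        field_simp
      have h0 := congrArg (fun z => o.areaForm (A j - A₀) z) hbal
      simp only [map_sum, map_zero] at h0
      simp only [hrw] at h0
      rw [← Finset.mul_sum] at h0
      rcases mul_eq_zero.mp h0 with h | h
      · exact absurd h (norm_ne_zero_iff.2 (hv0 j))
      · simpa [Fin.sum_univ_four] using h
    have dis12 : o.oangle (A 1 - A₀) (A 2 - A₀) = (a2 : Real.Angle) ∨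
        o.oangle (A 1 - A₀) (A 2 - A₀) = -(a2 : Real.Angle) :=
      o.oangle_eq_angle_or_eq_neg_angle (hv0 1) (hv0 2)
    have dis23 : o.oangle (A 2 - A₀) (A 3 - A₀) = (a3 : Real.Angle) ∨
        o.oangle (A 2 - A₀) (A 3 - A₀) = -(a3 : Real.Angle) :=
      o.oangle_eq_angle_or_eq_neg_angle (hv0 2) (hv0 3)
    have dis30 : o.oangle (A 3 - A₀) (A 0 - A₀) = (a4 : Real.Angle) ∨
        o.oangle (A 3 - A₀) (A 0 - A₀) = -(a4 : Real.Angle) :=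
      o.oangle_eq_angle_or_eq_neg_angle (hv0 3) (hv0 0)
    have dis02 : o.oangle (A 0 - A₀) (A 2 - A₀) = (ψ : Real.Angle) ∨
        o.oangle (A 0 - A₀) (A 2 - A₀) = -(ψ : Real.Angle) :=
      o.oangle_eq_angle_or_eq_neg_angle (hv0 0) (hv0 2)
    rcases dis12 with t12 | t12
    · -- oangle v1 v2 = +a2
      have t02 : o.oangle (A 0 - A₀) (A 2 - A₀) = ((a1 + a2 : ℝ) : Real.Angle) := by
        rw [← o.oangle_add (hv0 0) (hv0 1) (hv0 2), t01, t12, ← Real.Angle.coe_add]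
      rcases dis23 with t23 | t23
      · -- good configuration
        have t13 : o.oangle (A 1 - A₀) (A 3 - A₀) = ((a2 + a3 : ℝ) : Real.Angle) := by
          rw [← o.oangle_add (hv0 1) (hv0 2) (hv0 3), t12, t23, ← Real.Angle.coe_add]
        have sψeq : Real.sin ψ = - Real.sin (a1 + a2) := by
          rcases dis02 with h | h
          · exfalso
            have h2 : ((ψ : ℝ) : Real.Angle) = ((a1 + a2 : ℝ) : Real.Angle) := by
              rw [← h, t02]
            have h3 := congrArg Real.Angle.sin h2
            rw [Real.Angle.sin_coe, Real.Angle.sin_coe] at h3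
            linarith
          · have h2 : ((-ψ : ℝ) : Real.Angle) = ((a1 + a2 : ℝ) : Real.Angle) := by
              rw [Real.Angle.coe_neg, ← h, t02]
            have h3 := congrArg Real.Angle.sin h2
            rw [Real.Angle.sin_coe, Real.Angle.sin_coe, Real.sin_neg] at h3
            linarith
        constructor
        · -- goal 2, from the cross relation with v2
          have e2 := hS 2
          have t20 : o.oangle (A 2 - A₀) (A 0 - A₀) = ((-(a1 + a2) : ℝ) : Real.Angle) := by
            rw [o.oangle_rev, t02, ← Real.Angle.coe_neg]
          have t21 : o.oangle (A 2 - A₀) (A 1 - A₀) = ((-a2 : ℝ) : Real.Angle) := by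
            rw [o.oangle_rev, t12, ← Real.Angle.coe_neg]
          rw [t20, t21, o.oangle_self, t23] at e2
          simp only [Real.Angle.sin_coe, Real.Angle.sin_zero, Real.sin_neg] at e2
          rw [sψeq]
          linarith
        · -- goal 3, from the cross relation with v1
          have e1 := hS 1
          have t10 : o.oangle (A 1 - A₀) (A 0 - A₀) = ((-a1 : ℝ) : Real.Angle) := by
            rw [o.oangle_rev, t01, ← Real.Angle.coe_neg]
          rw [t10, o.oangle_self, t12, t13] at e1
          simp only [Real.Angle.sin_coe, Real.Angle.sin_zero, Real.sin_neg] at e1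
          have hs23 : Real.sin (a2 + a3) = - Real.sin (a1 + a5) := by
            rw [ha54, show a2 + a3 = -(a1 + a4) + 2 * Real.pi by linarith,
              Real.sin_add_two_pi, Real.sin_neg]
          rw [hs23] at e1
          linarith
      · -- oangle v2 v3 = -a3 : impossible
        exfalso
        have t03 : o.oangle (A 0 - A₀) (A 3 - A₀) = ((a1 + a2 - a3 : ℝ) : Real.Angle) := by
          rw [← o.oangle_add (hv0 0) (hv0 2) (hv0 3), t02, t23, ← Real.Angle.coe_neg,
            ← Real.Angle.coe_add]
          congr 1 <;> ring
        have t30 : o.oangle (A 3 - A₀) (A 0 - A₀) = ((a3 - a1 - a2 : ℝ) : Real.Angle) := by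
          rw [o.oangle_rev, t03, ← Real.Angle.coe_neg]
          congr 1 <;> ring
        rcases dis30 with h | h
        · have hco : ((a3 - a1 - a2 : ℝ) : Real.Angle) = ((a4 : ℝ) : Real.Angle) := by
            rw [← t30, h]
          obtain ⟨k, hk⟩ := Real.Angle.angle_eq_iff_two_pi_dvd_sub.mp hco
          have hk1 : (-2 : ℝ) < (k : ℝ) := by
            have h' : 2 * Real.pi * (-2 : ℝ) < 2 * Real.pi * (k : ℝ) := by
              rw [← hk]; linarith [h34.1, h12.2, h23.2, h41.2]
            exact (mul_lt_mul_iff_right₀ h2π).mp h'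
          have hk2 : ((k : ℝ)) < 1 := by
            have h' : 2 * Real.pi * (k : ℝ) < 2 * Real.pi * (1 : ℝ) := by
              rw [← hk]; linarith [h34.2, htri, h41.1]
            exact (mul_lt_mul_iff_right₀ h2π).mp h'
          have hk' : k = -1 ∨ k = 0 := by
            have h1 : (-2 : ℤ) < k := by exact_mod_cast hk1
            have h2 : k < (1 : ℤ) := by exact_mod_cast hk2
            omega
          rcases hk' with rfl | rfl
          · push_cast at hk; linarith [h34.1]
          · push_cast at hk; linarith [htri, h34.2, h41.1]
        · have hco : ((a3 - a1 - a2 : ℝ) : Real.Angle) = ((-a4 : ℝ) : Real.Angle) := by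
            rw [← t30, h, Real.Angle.coe_neg]
          obtain ⟨k, hk⟩ := Real.Angle.angle_eq_iff_two_pi_dvd_sub.mp hco
          have hk1 : (-2 : ℝ) < (k : ℝ) := by
            have h' : 2 * Real.pi * (-2 : ℝ) < 2 * Real.pi * (k : ℝ) := by
              rw [← hk]; linarith [h34.1, h12.2, h23.2, h41.1]
            exact (mul_lt_mul_iff_right₀ h2π).mp h'
          have hk2 : ((k : ℝ)) < 1 := by
            have h' : 2 * Real.pi * (k : ℝ) < 2 * Real.pi * (1 : ℝ) := by
              rw [← hk]; linarith [h34.2, htri, h41.2]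
            exact (mul_lt_mul_iff_right₀ h2π).mp h'
          have hk' : k = -1 ∨ k = 0 := by
            have h1 : (-2 : ℤ) < k := by exact_mod_cast hk1
            have h2 : k < (1 : ℤ) := by exact_mod_cast hk2
            omega
          rcases hk' with rfl | rfl
          · push_cast at hk; linarith [h34.1, h41.1]
          · push_cast at hk; linarith [htri]
    · -- oangle v1 v2 = -a2
      have t02 : o.oangle (A 0 - A₀) (A 2 - A₀) = ((a1 - a2 : ℝ) : Real.Angle) := by
        rw [← o.oangle_add (hv0 0) (hv0 1) (hv0 2), t01, t12, ← Real.Angle.coe_neg,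
          ← Real.Angle.coe_add]
        congr 1 <;> ring
      exfalso
      rcases dis23 with t23 | t23
      · -- oangle v2 v3 = +a3
        have t13 : o.oangle (A 1 - A₀) (A 3 - A₀) = ((a3 - a2 : ℝ) : Real.Angle) := by
          rw [← o.oangle_add (hv0 1) (hv0 2) (hv0 3), t12, t23, ← Real.Angle.coe_neg,
            ← Real.Angle.coe_add]
          congr 1 <;> ring
        have t03 : o.oangle (A 0 - A₀) (A 3 - A₀) = ((a1 - a2 + a3 : ℝ) : Real.Angle) := by
          rw [← o.oangle_add (hv0 0) (hv0 2) (hv0 3), t02, t23, ← Real.Angle.coe_add]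
        have t30 : o.oangle (A 3 - A₀) (A 0 - A₀) = ((a2 - a1 - a3 : ℝ) : Real.Angle) := by
          rw [o.oangle_rev, t03, ← Real.Angle.coe_neg]
          congr 1 <;> ring
        rcases dis30 with h | h
        · have hco : ((a2 - a1 - a3 : ℝ) : Real.Angle) = ((a4 : ℝ) : Real.Angle) := by
            rw [← t30, h]
          obtain ⟨k, hk⟩ := Real.Angle.angle_eq_iff_two_pi_dvd_sub.mp hco
          have hk1 : (-2 : ℝ) < (k : ℝ) := by
            have h' : 2 * Real.pi * (-2 : ℝ) < 2 * Real.pi * (k : ℝ) := by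
              rw [← hk]; linarith [h23.1, h12.2, h34.2, h41.2]
            exact (mul_lt_mul_iff_right₀ h2π).mp h'
          have hk2 : ((k : ℝ)) < 1 := by
            have h' : 2 * Real.pi * (k : ℝ) < 2 * Real.pi * (1 : ℝ) := by
              rw [← hk]; linarith [h23.2, h12.1, h34.1, h41.1]
            exact (mul_lt_mul_iff_right₀ h2π).mp h'
          have hk' : k = -1 ∨ k = 0 := by
            have h1 : (-2 : ℤ) < k := by exact_mod_cast hk1
            have h2 : k < (1 : ℤ) := by exact_mod_cast hk2
            omega
          rcases hk' with rfl | rfl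
          · push_cast at hk; linarith [h23.1]
          · push_cast at hk; linarith [h23.2]
        · -- a1 + a3 = π : contradiction with balance
          have hco : ((a2 - a1 - a3 : ℝ) : Real.Angle) = ((-a4 : ℝ) : Real.Angle) := by
            rw [← t30, h, Real.Angle.coe_neg]
          obtain ⟨k, hk⟩ := Real.Angle.angle_eq_iff_two_pi_dvd_sub.mp hco
          have hk1 : (-1 : ℝ) < (k : ℝ) := by
            have h' : 2 * Real.pi * (-1 : ℝ) < 2 * Real.pi * (k : ℝ) := by
              rw [← hk]; linarith [h23.1, h12.2, h34.2, h41.1]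
            exact (mul_lt_mul_iff_right₀ h2π).mp h'
          have hk2 : ((k : ℝ)) < 1 := by
            have h' : 2 * Real.pi * (k : ℝ) < 2 * Real.pi * (1 : ℝ) := by
              rw [← hk]; linarith [h23.2, h12.1, h34.1, h41.2]
            exact (mul_lt_mul_iff_right₀ h2π).mp h'
          have hk' : k = 0 := by
            have h1 : (-1 : ℤ) < k := by exact_mod_cast hk1
            have h2 : k < (1 : ℤ) := by exact_mod_cast hk2
            omega
          subst hk'
          push_cast at hk
          have h13 : a1 + a3 = Real.pi := by linarith [hcyc]
          -- cross relation with v1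
          have e1 := hS 1
          have t10 : o.oangle (A 1 - A₀) (A 0 - A₀) = ((-a1 : ℝ) : Real.Angle) := by
            rw [o.oangle_rev, t01, ← Real.Angle.coe_neg]
          rw [t10, o.oangle_self, t12, t13, ← Real.Angle.coe_neg] at e1
          simp only [Real.Angle.sin_coe, Real.Angle.sin_zero, Real.sin_neg] at e1
          -- cross relation with v3
          have e3 := hS 3
          have t31 : o.oangle (A 3 - A₀) (A 1 - A₀) = ((a2 - a3 : ℝ) : Real.Angle) := by
            rw [o.oangle_rev, t13, ← Real.Angle.coe_neg]
            congr 1 <;> ring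
          have t32 : o.oangle (A 3 - A₀) (A 2 - A₀) = ((-a3 : ℝ) : Real.Angle) := by
            rw [o.oangle_rev, t23, ← Real.Angle.coe_neg]
          rw [t30, t31, t32, o.oangle_self] at e3
          simp only [Real.Angle.sin_coe, Real.Angle.sin_zero, Real.sin_neg] at e3
          rw [show a2 - a1 - a3 = a2 - Real.pi by linarith, Real.sin_sub_pi] at e3
          have hpos1 : 0 < B 3 * Real.sin (a3 - a2) := by
            have hx : B 3 * Real.sin (a3 - a2) = B 0 * Real.sin a1 + B 2 * Real.sin a2 := by
              linarith
            rw [hx]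
            exact add_pos (mul_pos (hB 0) sin1) (mul_pos (hB 2) sin2)
          have hpos2 : 0 < B 1 * Real.sin (a2 - a3) := by
            have hx : B 1 * Real.sin (a2 - a3) = B 0 * Real.sin a2 + B 2 * Real.sin a3 := by
              linarith
            rw [hx]
            exact add_pos (mul_pos (hB 0) sin2) (mul_pos (hB 2) sin3)
          have hs1 : 0 < Real.sin (a3 - a2) := by
            rcases mul_pos_iff.mp hpos1 with ⟨_, hh⟩ | ⟨hh, _⟩
            · exact hh
            · exact absurd hh (not_lt.mpr (hB 3).le)
          have hs2 : 0 < Real.sin (a2 - a3) := by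
            rcases mul_pos_iff.mp hpos2 with ⟨_, hh⟩ | ⟨hh, _⟩
            · exact hh
            · exact absurd hh (not_lt.mpr (hB 1).le)
          rw [show a3 - a2 = -(a2 - a3) by ring, Real.sin_neg] at hs1
          linarith
      · -- oangle v2 v3 = -a3
        have t13 : o.oangle (A 1 - A₀) (A 3 - A₀) = ((-(a2 + a3) : ℝ) : Real.Angle) := by
          rw [← o.oangle_add (hv0 1) (hv0 2) (hv0 3), t12, t23, ← Real.Angle.coe_neg,
            ← Real.Angle.coe_neg, ← Real.Angle.coe_add]
          congr 1 <;> ring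
        have t03 : o.oangle (A 0 - A₀) (A 3 - A₀) = ((a1 - a2 - a3 : ℝ) : Real.Angle) := by
          rw [← o.oangle_add (hv0 0) (hv0 2) (hv0 3), t02, t23, ← Real.Angle.coe_neg,
            ← Real.Angle.coe_add]
          congr 1 <;> ring
        have t30 : o.oangle (A 3 - A₀) (A 0 - A₀) = ((a2 + a3 - a1 : ℝ) : Real.Angle) := by
          rw [o.oangle_rev, t03, ← Real.Angle.coe_neg]
          congr 1 <;> ring
        rcases dis30 with h | h
        · -- a2 + a3 = π : contradiction with balance
          have hco : ((a2 + a3 - a1 : ℝ) : Real.Angle) = ((a4 : ℝ) : Real.Angle) := by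
            rw [← t30, h]
          obtain ⟨k, hk⟩ := Real.Angle.angle_eq_iff_two_pi_dvd_sub.mp hco
          have hk1 : (-1 : ℝ) < (k : ℝ) := by
            have h' : 2 * Real.pi * (-1 : ℝ) < 2 * Real.pi * (k : ℝ) := by
              rw [← hk]; linarith [h23.1, h34.1, h12.2, h41.2]
            exact (mul_lt_mul_iff_right₀ h2π).mp h'
          have hk2 : ((k : ℝ)) < 1 := by
            have h' : 2 * Real.pi * (k : ℝ) < 2 * Real.pi * (1 : ℝ) := by
              rw [← hk]; linarith [h23.2, h34.2, h12.1, h41.1]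
            exact (mul_lt_mul_iff_right₀ h2π).mp h'
          have hk' : k = 0 := by
            have h1 : (-1 : ℤ) < k := by exact_mod_cast hk1
            have h2 : k < (1 : ℤ) := by exact_mod_cast hk2
            omega
          subst hk'
          push_cast at hk
          have h23' : a2 + a3 = Real.pi := by linarith [hcyc]
          have e1 := hS 1
          have t10 : o.oangle (A 1 - A₀) (A 0 - A₀) = ((-a1 : ℝ) : Real.Angle) := by
            rw [o.oangle_rev, t01, ← Real.Angle.coe_neg]
          rw [t10, o.oangle_self, t12, t13, ← Real.Angle.coe_neg] at e1
          simp only [Real.Angle.sin_coe, Real.Angle.sin_zero, Real.sin_neg] at e1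
          rw [h23', Real.sin_pi] at e1
          have hB0 := mul_pos (hB 0) sin1
          have hB2 := mul_pos (hB 2) sin2
          linarith
        · have hco : ((a2 + a3 - a1 : ℝ) : Real.Angle) = ((-a4 : ℝ) : Real.Angle) := by
            rw [← t30, h, Real.Angle.coe_neg]
          obtain ⟨k, hk⟩ := Real.Angle.angle_eq_iff_two_pi_dvd_sub.mp hco
          have hk1 : (-1 : ℝ) < (k : ℝ) := by
            have h' : 2 * Real.pi * (-1 : ℝ) < 2 * Real.pi * (k : ℝ) := by
              rw [← hk]; linarith [h23.1, h34.1, h12.2, h41.1]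
            exact (mul_lt_mul_iff_right₀ h2π).mp h'
          have hk2 : ((k : ℝ)) < 2 := by
            have h' : 2 * Real.pi * (k : ℝ) < 2 * Real.pi * (2 : ℝ) := by
              rw [← hk]; linarith [h23.2, h34.2, h12.1, h41.2]
            exact (mul_lt_mul_iff_right₀ h2π).mp h'
          have hk' : k = 0 ∨ k = 1 := by
            have h1 : (-1 : ℤ) < k := by exact_mod_cast hk1
            have h2 : k < (2 : ℤ) := by exact_mod_cast hk2
            omega
          rcases hk' with rfl | rfl
          · push_cast at hk; linarith [h12.2, hcyc]
          · push_cast at hk; linarith [h12.1, hcyc]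
  -- choose a suitable orientation and conclude
  have main : B 1 * Real.sin a2 = B 0 * Real.sin ψ + B 3 * Real.sin a3 ∧
      B 2 * Real.sin a2 = B 0 * Real.sin a1 + B 3 * Real.sin (a1 + a5) := by
    let o₀ : Orientation ℝ (EuclideanSpace ℝ (Fin 2)) (Fin 2) :=
      (EuclideanSpace.basisFun (Fin 2) ℝ).toBasis.orientation
    have dis : o₀.oangle (A 0 - A₀) (A 1 - A₀) = (a1 : Real.Angle) ∨
        o₀.oangle (A 0 - A₀) (A 1 - A₀) = -(a1 : Real.Angle) :=
      o₀.oangle_eq_angle_or_eq_neg_angle (hv0 0) (hv0 1)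
    rcases dis with h | h
    · exact key o₀ h
    · refine key (-o₀) ?_
      rw [Orientation.oangle_neg_orientation_eq_neg, h, neg_neg]
  exact ⟨by linarith, main.1, main.2⟩
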